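/- Fix r ≥ 1. Let I ⊂ ℝ be a closed bounded interval of length |I| ≥ 1, let f : I → ℝ be of class C^{r+1}, let τ ∈ (0,1) satisfy inf_{x∈I} max_{1≤l≤r} |f^{(l)}(x)| ≥ τ, and set A = sup_{x∈I} max_{1≤l≤r+1} |f^{(l)}(x)| < ∞. Then there is a constant C = C(r) > 0 depending only on r (not on f) such that for every η ∈ (0,1), meas({x ∈ I : |f(x)| ≤ η}) ≤ C·A·|I|·η^{1/r}/τ². -/

import Mathlib

open Real MeasureTheory Set

lemma mvt_lower {u v : ℝ} (g h : ℝ → ℝ) {c : ℝ}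
    (hderiv : ∀ x ∈ Icc u v, HasDerivWithinAt g (h x) (Icc u v) x)
    (hc : ∀ x ∈ Icc u v, c ≤ h x) :
    ∀ x ∈ Icc u v, ∀ y ∈ Icc u v, x ≤ y → c * (y - x) ≤ g y - g x := by
  have hcont : ContinuousOn g (Icc u v) := fun x hx => (hderiv x hx).continuousWithinAt
  have hat : ∀ x ∈ Ioo u v, HasDerivAt g (h x) x := by
    intro x hx
    exact (hderiv x (Ioo_subset_Icc_self hx)).hasDerivAt (Icc_mem_nhds hx.1 hx.2)
  have hdiff : DifferentiableOn ℝ g (interior (Icc u v)) := by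
    rw [interior_Icc]
    exact fun x hx => ((hat x hx).differentiableAt).differentiableWithinAt
  refine Convex.mul_sub_le_image_sub_of_le_deriv (convex_Icc u v) hcont hdiff ?_
  intro x hx
  rw [interior_Icc] at hx
  rw [(hat x hx).deriv]
  exact hc x (Ioo_subset_Icc_self hx)

lemma level_small {u v : ℝ} (g h : ℝ → ℝ) {c ε : ℝ} (hcpos : 0 < c) (hε : 0 ≤ ε)
    (hderiv : ∀ x ∈ Icc u v, HasDerivWithinAt g (h x) (Icc u v) x)
    (hc : ∀ x ∈ Icc u v, c ≤ h x) :
    volume {x ∈ Icc u v | |g x| ≤ ε} ≤ ENNReal.ofReal (4 * (ε / c)) := by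
  set E := {x ∈ Icc u v | |g x| ≤ ε} with hEdef
  rcases E.eq_empty_or_nonempty with hE | ⟨x₀, hx₀⟩
  · simp [hE]
  have key : ∀ y ∈ E, ∀ z ∈ E, y ≤ z → z - y ≤ 2 * ε / c := by
    intro y hy z hz hyz
    have := mvt_lower g h hderiv hc y hy.1 z hz.1 hyz
    have h2 : g z - g y ≤ 2 * ε := by
      have := abs_sub_abs_le_abs_sub (g z) (g y)
      have hgz := hz.2; have hgy := hy.2
      have := abs_sub (g z) (g y)
      calc g z - g y ≤ |g z - g y| := le_abs_self _
        _ ≤ |g z| + |g y| := abs_sub _ _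
        _ ≤ 2 * ε := by linarith
    rw [le_div_iff₀ hcpos]
    nlinarith
  have hsub : E ⊆ Metric.closedBall x₀ (2 * ε / c) := by
    intro y hy
    rw [Metric.mem_closedBall, Real.dist_eq, abs_le]
    rcases le_total x₀ y with h1 | h1
    · constructor
      · have : 0 ≤ 2 * ε / c := by positivity
        linarith
      · linarith [key x₀ hx₀ y hy h1]
    · constructor
      · linarith [key y hy x₀ hx₀ h1]
      · have : 0 ≤ 2 * ε / c := by positivity
        linarith
  calc volume E ≤ volume (Metric.closedBall x₀ (2 * ε / c)) := measure_mono hsub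
    _ = ENNReal.ofReal (2 * (2 * ε / c)) := by rw [Real.volume_closedBall]
    _ ≤ ENNReal.ofReal (4 * (ε / c)) := by
        apply ENNReal.ofReal_le_ofReal; ring_nf; exact le_rfl

lemma sign_const {u v : ℝ} (h : ℝ → ℝ) {c : ℝ} (hcpos : 0 < c)
    (hcont : ContinuousOn h (Icc u v))
    (hc : ∀ x ∈ Icc u v, c ≤ |h x|) :
    (∀ x ∈ Icc u v, c ≤ h x) ∨ (∀ x ∈ Icc u v, h x ≤ -c) := by
  by_cases hpos : ∀ x ∈ Icc u v, 0 < h x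
  · left
    intro x hx
    have := hc x hx
    rwa [abs_of_pos (hpos x hx)] at this
  · right
    push_neg at hpos
    obtain ⟨y, hy, hy0⟩ := hpos
    have hyc : h y ≤ -c := by
      rcases abs_cases (h y) with ⟨h1, _⟩ | ⟨h1, _⟩
      · linarith [hc y hy]
      · linarith [hc y hy]
    intro x hx
    by_contra hcon
    push_neg at hcon
    have hxc : c ≤ h x := by
      rcases abs_cases (h x) with ⟨h1, _⟩ | ⟨h1, _⟩
      · linarith [hc x hx]
      · linarith [hc x hx]
    have hsub : uIcc x y ⊆ Icc u v := uIcc_subset_Icc hx hy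
    have : (0:ℝ) ∈ uIcc (h x) (h y) := by
      rw [Set.mem_uIcc]
      right; constructor <;> linarith
    obtain ⟨z, hz, hz0⟩ := intermediate_value_uIcc (hcont.mono hsub) this
    have := hc z (hsub hz)
    rw [hz0] at this
    simp at this
    linarith

lemma main_level (k : ℕ) (hk : 1 ≤ k) :
    ∀ u v : ℝ, u ≤ v → ∀ g : ℕ → ℝ → ℝ,
    (∀ i < k, ∀ x ∈ Icc u v, HasDerivWithinAt (g i) (g (i+1) x) (Icc u v) x) →
    ContinuousOn (g k) (Icc u v) →
    ∀ c ε : ℝ, 0 < c → 0 < ε →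
    (∀ x ∈ Icc u v, c ≤ |g k x|) →
    volume {x ∈ Icc u v | |g 0 x| ≤ ε} ≤
      ENNReal.ofReal (6^k * (ε/c) ^ ((1:ℝ)/(k:ℝ))) := by
  induction k, hk using Nat.le_induction with
  | base =>
    intro u v huv g hder hcont c ε hcpos hεpos habs
    have h1 : ∀ x ∈ Icc u v, HasDerivWithinAt (g 0) (g 1 x) (Icc u v) x :=
      hder 0 (by norm_num)
    have hgoal : ENNReal.ofReal (4 * (ε/c)) ≤
        ENNReal.ofReal (6^1 * (ε/c) ^ ((1:ℝ)/((1:ℕ):ℝ))) := by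
      apply ENNReal.ofReal_le_ofReal
      have : (ε/c) ^ ((1:ℝ)/((1:ℕ):ℝ)) = ε/c := by
        norm_num
      rw [this]
      have : 0 ≤ ε/c := by positivity
      nlinarith
    rcases sign_const (g 1) hcpos hcont habs with hs | hs
    · exact le_trans (level_small (g 0) (g 1) hcpos hεpos.le h1 hs) hgoal
    · have key := level_small (fun x => -(g 0 x)) (fun x => -(g 1 x)) hcpos hεpos.le
        (fun x hx => (h1 x hx).neg) (fun x hx => by show c ≤ -g 1 x; linarith [hs x hx])
      simp only [abs_neg] at key
      exact le_trans key hgoal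
  | succ k hk IH =>
    intro u v huv g hder hcont c ε hcpos hεpos habs
    have main_pos : ∀ g : ℕ → ℝ → ℝ,
        (∀ i < k+1, ∀ x ∈ Icc u v, HasDerivWithinAt (g i) (g (i+1) x) (Icc u v) x) →
        (∀ x ∈ Icc u v, c ≤ g (k+1) x) →
        volume {x ∈ Icc u v | |g 0 x| ≤ ε} ≤
          ENNReal.ofReal (6^(k+1) * (ε/c) ^ ((1:ℝ)/((k+1:ℕ):ℝ))) := by
      intro g hder hpos
      have hkR : (0:ℝ) < (k:ℝ) := by exact_mod_cast hk
      have hk1R : (0:ℝ) < (k:ℝ) + 1 := by linarith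
      set a : ℝ := 1/((k:ℝ)+1) with ha
      set b : ℝ := (k:ℝ)/((k:ℝ)+1) with hb
      set δ : ℝ := ε ^ a * c ^ b with hδ
      have hδpos : 0 < δ := by positivity
      have hderk : ∀ x ∈ Icc u v, HasDerivWithinAt (g k) (g (k+1) x) (Icc u v) x :=
        hder k (lt_add_one k)
      have hcontgk : ContinuousOn (g k) (Icc u v) :=
        fun x hx => (hderk x hx).continuousWithinAt
      have hmono := mvt_lower (g k) (g (k+1)) hderk hpos
      -- the three pieces
      have hSbound : volume {x ∈ Icc u v | |g k x| ≤ δ} ≤ ENNReal.ofReal (4 * (δ/c)) :=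
        level_small (g k) (g (k+1)) hcpos hδpos.le hderk hpos
      set Lset : Set ℝ := {x ∈ Icc u v | g k x < -δ} with hLdef
      set Rset : Set ℝ := {x ∈ Icc u v | δ < g k x} with hRdef
      have hLbound : volume {x ∈ Lset | |g 0 x| ≤ ε} ≤
          ENNReal.ofReal (6^k * (ε/δ) ^ ((1:ℝ)/(k:ℝ))) := by
        rcases Lset.eq_empty_or_nonempty with hL | hL
        · rw [hL]; simp
        · have hbdd : BddAbove Lset := bddAbove_Icc.mono (fun x hx => hx.1)
          set p := sSup Lset with hp
          have hlub : IsLUB Lset p := isLUB_csSup hL hbdd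
          have hclosed : IsClosed (Icc u v ∩ g k ⁻¹' (Iic (-δ))) :=
            hcontgk.preimage_isClosed_of_isClosed isClosed_Icc isClosed_Iic
          have hpmem : p ∈ Icc u v ∩ g k ⁻¹' (Iic (-δ)) := by
            have hsub : closure Lset ⊆ Icc u v ∩ g k ⁻¹' (Iic (-δ)) :=
              closure_minimal (fun x hx => ⟨hx.1, le_of_lt hx.2⟩) hclosed
            exact hsub (hlub.mem_closure hL)
          have hup : u ≤ p := hpmem.1.1
          have habs' : ∀ x ∈ Icc u p, δ ≤ |g k x| := by
            intro x hx
            have hxI : x ∈ Icc u v := ⟨hx.1, hx.2.trans hpmem.1.2⟩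
            have h1 := hmono x hxI p hpmem.1 hx.2
            have h2 : g k p ≤ -δ := hpmem.2
            have h3 : g k x ≤ -δ := by nlinarith [mul_nonneg hcpos.le (sub_nonneg.2 hx.2)]
            calc δ ≤ -(g k x) := by linarith
              _ ≤ |g k x| := neg_le_abs _
          have happ := IH u p hup g
            (fun i hi x hx => (hder i (hi.trans (lt_add_one _)) x
              (Icc_subset_Icc_right hpmem.1.2 hx)).mono (Icc_subset_Icc_right hpmem.1.2))
            (hcontgk.mono (Icc_subset_Icc_right hpmem.1.2)) δ ε hδpos hεpos habs'
          refine le_trans (measure_mono ?_) happ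
          rintro x ⟨hxL, hxε⟩
          exact ⟨⟨hxL.1.1, hlub.1 hxL⟩, hxε⟩
      have hRbound : volume {x ∈ Rset | |g 0 x| ≤ ε} ≤
          ENNReal.ofReal (6^k * (ε/δ) ^ ((1:ℝ)/(k:ℝ))) := by
        rcases Rset.eq_empty_or_nonempty with hR | hR
        · rw [hR]; simp
        · have hbdd : BddBelow Rset := bddBelow_Icc.mono (fun x hx => hx.1)
          set q := sInf Rset with hq
          have hglb : IsGLB Rset q := isGLB_csInf hR hbdd
          have hclosed : IsClosed (Icc u v ∩ g k ⁻¹' (Ici δ)) :=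
            hcontgk.preimage_isClosed_of_isClosed isClosed_Icc isClosed_Ici
          have hqmem : q ∈ Icc u v ∩ g k ⁻¹' (Ici δ) := by
            have hsub : closure Rset ⊆ Icc u v ∩ g k ⁻¹' (Ici δ) :=
              closure_minimal (fun x hx => ⟨hx.1, le_of_lt hx.2⟩) hclosed
            exact hsub (hglb.mem_closure hR)
          have hqv : q ≤ v := hqmem.1.2
          have habs' : ∀ x ∈ Icc q v, δ ≤ |g k x| := by
            intro x hx
            have hxI : x ∈ Icc u v := ⟨hqmem.1.1.trans hx.1, hx.2⟩
            have h1 := hmono q hqmem.1 x hxI hx.1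
            have h2 : δ ≤ g k q := hqmem.2
            have h3 : δ ≤ g k x := by nlinarith [mul_nonneg hcpos.le (sub_nonneg.2 hx.1)]
            exact h3.trans (le_abs_self _)
          have happ := IH q v hqv g
            (fun i hi x hx => (hder i (hi.trans (lt_add_one _)) x
              (Icc_subset_Icc_left hqmem.1.1 hx)).mono (Icc_subset_Icc_left hqmem.1.1))
            (hcontgk.mono (Icc_subset_Icc_left hqmem.1.1)) δ ε hδpos hεpos habs'
          refine le_trans (measure_mono ?_) happ
          rintro x ⟨hxR, hxε⟩
          exact ⟨⟨hglb.1 hxR, hxR.1.2⟩, hxε⟩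
      -- cover
      have hcover : {x ∈ Icc u v | |g 0 x| ≤ ε} ⊆
          {x ∈ Lset | |g 0 x| ≤ ε} ∪ ({x ∈ Icc u v | |g k x| ≤ δ} ∪ {x ∈ Rset | |g 0 x| ≤ ε}) := by
        rintro x ⟨hxI, hxε⟩
        by_cases h1 : g k x < -δ
        · exact Or.inl ⟨⟨hxI, h1⟩, hxε⟩
        by_cases h2 : δ < g k x
        · exact Or.inr (Or.inr ⟨⟨hxI, h2⟩, hxε⟩)
        · push_neg at h1 h2
          exact Or.inr (Or.inl ⟨hxI, abs_le.2 ⟨h1, h2⟩⟩)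
      have hvol : volume {x ∈ Icc u v | |g 0 x| ≤ ε} ≤
          ENNReal.ofReal (6^k * (ε/δ) ^ ((1:ℝ)/(k:ℝ))) +
          (ENNReal.ofReal (4 * (δ/c)) + ENNReal.ofReal (6^k * (ε/δ) ^ ((1:ℝ)/(k:ℝ)))) := by
        refine le_trans (measure_mono hcover) ?_
        refine le_trans (measure_union_le _ _) ?_
        gcongr
        exact le_trans (measure_union_le _ _) (by gcongr)
      refine le_trans hvol ?_
      -- now real arithmetic
      have hεδ : ε/δ = (ε/c) ^ b := by
        rw [hδ, div_mul_eq_div_div]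
        have h2 : ε / ε ^ a = ε ^ b := by
          have : b = 1 - a := by rw [ha, hb]; field_simp; ring
          rw [this, Real.rpow_sub hεpos, Real.rpow_one]
        rw [h2, ← Real.div_rpow hεpos.le hcpos.le]
      have hδc : δ/c = (ε/c) ^ a := by
        rw [hδ, mul_div_assoc]
        have h2 : c ^ b / c = c ^ (-a) := by
          have : -a = b - 1 := by rw [ha, hb]; field_simp; ring
          rw [this, Real.rpow_sub hcpos, Real.rpow_one]
        rw [h2, Real.rpow_neg hcpos.le, ← div_eq_mul_inv, ← Real.div_rpow hεpos.le hcpos.le]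
      have hcomp : ((ε/c) ^ b) ^ ((1:ℝ)/(k:ℝ)) = (ε/c) ^ a := by
        rw [← Real.rpow_mul (by positivity : (0:ℝ) ≤ ε/c)]
        congr 1
        rw [hb, ha]
        field_simp
      rw [hεδ, hδc, hcomp]
      rw [← ENNReal.ofReal_add (by positivity) (by positivity),
          ← ENNReal.ofReal_add (by positivity) (by positivity)]
      apply ENNReal.ofReal_le_ofReal
      have hT : (0:ℝ) ≤ (ε/c) ^ a := by positivity
      have h6 : (1:ℝ) ≤ 6 ^ k := one_le_pow₀ (by norm_num)
      have hcast : ((k+1:ℕ):ℝ) = (k:ℝ)+1 := by push_cast; ring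
      rw [hcast, ← ha]
      have h66 : (6:ℝ)^(k+1) = 6 * 6^k := by ring
      rw [h66]
      nlinarith [mul_nonneg (sub_nonneg.2 h6) hT]
    rcases sign_const (g (k+1)) hcpos hcont habs with hs | hs
    · exact main_pos g hder hs
    · have key := main_pos (fun i x => -(g i x))
        (fun i hi x hx => (hder i hi x hx).neg)
        (fun x hx => by show c ≤ -g (k+1) x; linarith [hs x hx])
      simpa [abs_neg] using key

set_option maxHeartbeats 1000000 in
theorem stmt6 (r : ℕ) (hr : 1 ≤ r) :
    ∃ C : ℝ, 0 < C ∧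
      ∀ (a b : ℝ), 1 ≤ b - a →
      ∀ f : ℝ → ℝ, ContDiffOn ℝ (r + 1) f (Set.Icc a b) →
      ∀ τ ∈ Set.Ioo (0:ℝ) 1,
        (∀ x ∈ Set.Icc a b, ∃ l : ℕ, 1 ≤ l ∧ l ≤ r ∧
          τ ≤ |iteratedDerivWithin l f (Set.Icc a b) x|) →
      ∀ A : ℝ,
        (∀ x ∈ Set.Icc a b, ∀ l : ℕ, 1 ≤ l → l ≤ r + 1 →
          |iteratedDerivWithin l f (Set.Icc a b) x| ≤ A) →
      ∀ η ∈ Set.Ioo (0:ℝ) 1,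
        volume {x ∈ Set.Icc a b | |f x| ≤ η} ≤
          ENNReal.ofReal (C * A * (b - a) * η ^ (1 / (r : ℝ)) / τ ^ 2) := by
  refine ⟨6^(r+1), by positivity, ?_⟩
  intro a b hab f hf τ hτ hlow A hA η hη
  obtain ⟨hτ0, hτ1⟩ := hτ
  obtain ⟨hη0, hη1⟩ := hη
  have haltb : a < b := by linarith
  have hab' : a ≤ b := haltb.le
  have hrR : (1:ℝ) ≤ (r:ℝ) := by exact_mod_cast hr
  have hUD : UniqueDiffOn ℝ (Set.Icc a b) := uniqueDiffOn_Icc haltb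
  have hder : ∀ i ≤ r, ∀ x ∈ Set.Icc a b,
      HasDerivWithinAt (iteratedDerivWithin i f (Set.Icc a b))
        (iteratedDerivWithin (i+1) f (Set.Icc a b) x) (Set.Icc a b) x := by
    intro i hi x hx
    have hdiff : DifferentiableOn ℝ (iteratedDerivWithin i f (Set.Icc a b)) (Set.Icc a b) := by
      refine hf.differentiableOn_iteratedDerivWithin ?_ hUD
      exact_mod_cast Nat.lt_succ_of_le hi
    have h1 := (hdiff x hx).hasDerivWithinAt
    rwa [← iteratedDerivWithin_succ] at h1
  have hAτ : τ ≤ A := by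
    obtain ⟨l, hl1, hl2, hlτ⟩ := hlow a ⟨le_rfl, hab'⟩
    exact hlτ.trans (hA a ⟨le_rfl, hab'⟩ l hl1 (hl2.trans (Nat.le_succ r)))
  have hApos : 0 < A := lt_of_lt_of_le hτ0 hAτ
  set θ : ℝ := η ^ ((1:ℝ)/(r:ℝ)) with hθ
  have hθpos : 0 < θ := by positivity
  have hinvr : (1:ℝ)/(r:ℝ) ≤ 1 := by
    rw [div_le_one (by linarith)]; exact hrR
  have hθη : η ≤ θ := by
    have := Real.rpow_le_rpow_of_exponent_ge hη0 hη1.le hinvr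
    rwa [Real.rpow_one] at this
  by_cases hcase : τ ≤ 2*η
  · -- trivial case
    calc volume {x ∈ Set.Icc a b | |f x| ≤ η}
        ≤ volume (Set.Icc a b) := measure_mono (fun x hx => hx.1)
      _ = ENNReal.ofReal (b - a) := Real.volume_Icc
      _ ≤ ENNReal.ofReal (6^(r+1) * A * (b - a) * θ / τ^2) := by
          apply ENNReal.ofReal_le_ofReal
          rw [le_div_iff₀ (by positivity)]
          have h2θ : τ ≤ 2*θ := by linarith
          have h1 : τ * τ ≤ A * (2*θ) := mul_le_mul hAτ h2θ hτ0.le hApos.le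
          have h6 : (2:ℝ) ≤ 6^(r+1) := by
            calc (2:ℝ) ≤ 6^1 := by norm_num
              _ ≤ 6^(r+1) := pow_le_pow_right₀ (by norm_num) (by omega)
          have hba : (0:ℝ) ≤ b - a := by linarith
          have t1 : (b-a)*(τ*τ) ≤ (b-a)*(A*(2*θ)) := mul_le_mul_of_nonneg_left h1 hba
          have t2 : (0:ℝ) ≤ (6^(r+1) - 2) * ((b-a)*A*θ) :=
            mul_nonneg (by linarith) (by positivity)
          nlinarith [t1, t2]
  · push_neg at hcase
    set M : ℝ := A*(b-a)/τ with hM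
    have hM1 : 1 ≤ M := by
      rw [hM, le_div_iff₀ hτ0]; nlinarith
    set n : ℕ := ⌈2*A*(b-a)/τ⌉₊ with hn
    have hq2M : 2*A*(b-a)/τ = 2*M := by rw [hM]; ring
    have hn1 : 1 ≤ n := by
      rw [hn, Nat.one_le_ceil_iff]; positivity
    have hnpos : (0:ℝ) < n := by exact_mod_cast hn1
    have hnge : 2*M ≤ (n:ℝ) := by rw [← hq2M]; exact Nat.le_ceil _
    have hnle : (n:ℝ) ≤ 3*M := by
      have h1 : (n:ℝ) < 2*A*(b-a)/τ + 1 := Nat.ceil_lt_add_one (by positivity)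
      rw [hq2M] at h1; linarith
    set len : ℝ := (b-a)/n with hlen
    have hlenpos : 0 < len := by positivity
    have hnlen : (n:ℝ) * len = b - a := by
      rw [hlen]; field_simp
    have hlenle : len ≤ τ/(2*A) := by
      rw [hlen, div_le_div_iff₀ hnpos (by positivity)]
      have h'' : 2*M*τ ≤ (n:ℝ)*τ := mul_le_mul_of_nonneg_right hnge hτ0.le
      have h''' : 2*M*τ = 2*A*(b-a) := by rw [hM]; field_simp
      nlinarith
    have hpiece : ∀ j : ℕ, j < n →
        volume {x ∈ Set.Icc (a + j*len) (a + (j+1)*len) | |f x| ≤ η} ≤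
          ENNReal.ofReal (6^r * (2*θ/τ)) := by
      intro j hj
      set u : ℝ := a + j*len with hu
      set v : ℝ := a + (j+1)*len with hv
      have hvu : v - u = len := by rw [hu, hv]; ring
      have huv : u ≤ v := by linarith
      have hsub : Set.Icc u v ⊆ Set.Icc a b := by
        apply Set.Icc_subset_Icc
        · rw [hu]; have : 0 ≤ (j:ℝ)*len := by positivity
          linarith
        · rw [hv]
          have hj1 : (j:ℝ)+1 ≤ (n:ℝ) := by exact_mod_cast hj
          nlinarith
      have huI : u ∈ Set.Icc a b := hsub ⟨le_rfl, huv⟩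
      obtain ⟨l, hl1, hlr, hlτ⟩ := hlow u huI
      have hlpos : (0:ℝ) < l := by exact_mod_cast hl1
      have hbound : ∀ x ∈ Set.Icc u v, τ/2 ≤ |iteratedDerivWithin l f (Set.Icc a b) x| := by
        intro x hx
        have hxI := hsub hx
        have hlip := Convex.norm_image_sub_le_of_norm_hasDerivWithin_le
          (f' := fun y => iteratedDerivWithin (l+1) f (Set.Icc a b) y)
          (fun y hy => hder l hlr y hy)
          (fun y hy => by
            rw [Real.norm_eq_abs]
            exact hA y hy (l+1) (by omega) (by omega))
          (convex_Icc a b) huI hxI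
        rw [Real.norm_eq_abs, Real.norm_eq_abs] at hlip
        have hxu : |x - u| ≤ len := by
          rw [abs_le]; constructor
          · linarith [hx.1]
          · linarith [hx.2]
        have h2 : |iteratedDerivWithin l f (Set.Icc a b) x -
            iteratedDerivWithin l f (Set.Icc a b) u| ≤ A * len :=
          hlip.trans (by nlinarith [abs_nonneg (x-u)])
        have hAlen : A * len ≤ τ/2 := by
          have := mul_le_mul_of_nonneg_left hlenle hApos.le
          calc A * len ≤ A * (τ/(2*A)) := this
            _ = τ/2 := by field_simp
        have h3 := abs_sub_abs_le_abs_sub (iteratedDerivWithin l f (Set.Icc a b) u)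
          (iteratedDerivWithin l f (Set.Icc a b) x)
        rw [abs_sub_comm] at h3
        linarith
      have happ := main_level l hl1 u v huv (fun i => iteratedDerivWithin i f (Set.Icc a b))
        (fun i hi x hx => (hder i (by omega) x (hsub hx)).mono hsub)
        ((hf.continuousOn_iteratedDerivWithin (m := l)
          (by exact_mod_cast Nat.le_succ_of_le hlr) hUD).mono hsub)
        (τ/2) η (by positivity) hη0 hbound
      simp only [iteratedDerivWithin_zero] at happ
      refine le_trans happ (ENNReal.ofReal_le_ofReal ?_)
      have hbase : η/(τ/2) = 2*η/τ := by field_simp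
      have hb0 : 0 < 2*η/τ := by positivity
      have hb1 : 2*η/τ ≤ 1 := by rw [div_le_one hτ0]; linarith
      have e1 : (2*η/τ) ^ ((1:ℝ)/(l:ℝ)) ≤ (2*η/τ) ^ ((1:ℝ)/(r:ℝ)) := by
        apply Real.rpow_le_rpow_of_exponent_ge hb0 hb1
        apply div_le_div_of_nonneg_left (by norm_num) hlpos
        exact_mod_cast hlr
      have e2 : (2*η/τ) ^ ((1:ℝ)/(r:ℝ)) ≤ 2*θ/τ := by
        rw [Real.div_rpow (by positivity) hτ0.le, Real.mul_rpow (by norm_num) hη0.le]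
        have c1 : (2:ℝ)^((1:ℝ)/(r:ℝ)) ≤ 2 := by
          calc (2:ℝ)^((1:ℝ)/(r:ℝ)) ≤ 2^(1:ℝ) :=
              Real.rpow_le_rpow_of_exponent_le (by norm_num) hinvr
            _ = 2 := Real.rpow_one 2
        have c2 : τ ≤ τ^((1:ℝ)/(r:ℝ)) := by
          have := Real.rpow_le_rpow_of_exponent_ge hτ0 hτ1.le hinvr
          rwa [Real.rpow_one] at this
        rw [← hθ]
        exact div_le_div₀ (by positivity) (mul_le_mul_of_nonneg_right c1 hθpos.le) hτ0 c2
      have e3 : (6:ℝ)^l ≤ 6^r := pow_le_pow_right₀ (by norm_num) hlr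
      rw [hbase]
      exact mul_le_mul e3 (e1.trans e2) (by positivity) (by positivity)
    -- cover
    have hcover : {x ∈ Set.Icc a b | |f x| ≤ η} ⊆
        ⋃ j ∈ Finset.range n, {x ∈ Set.Icc (a + j*len) (a + (j+1)*len) | |f x| ≤ η} := by
      rintro x ⟨hxI, hxη⟩
      simp only [Set.mem_iUnion, Finset.mem_range, exists_prop]
      by_cases hxb : x = b
      · refine ⟨n-1, by omega, ⟨?_, ?_⟩, hxη⟩
        · have hc : ((n-1:ℕ):ℝ) = (n:ℝ) - 1 := by
            push_cast [Nat.cast_sub hn1]; ring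
          rw [hc, hxb]; nlinarith
        · have hc : ((n-1:ℕ):ℝ) + 1 = (n:ℝ) := by
            push_cast [Nat.cast_sub hn1]; ring
          rw [hc, hxb]; nlinarith
      · have hxa : 0 ≤ x - a := by linarith [hxI.1]
        have hxblt : x < b := lt_of_le_of_ne hxI.2 hxb
        set j : ℕ := ⌊(x-a)/len⌋₊ with hj
        have hjle : (j:ℝ) ≤ (x-a)/len := Nat.floor_le (by positivity)
        have hjlt : j < n := by
          rw [hj]
          rw [Nat.floor_lt (by positivity)]
          rw [div_lt_iff₀ hlenpos]
          nlinarith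
        have hjlt1 : (x-a)/len < (j:ℝ) + 1 := Nat.lt_floor_add_one _
        refine ⟨j, hjlt, ⟨?_, ?_⟩, hxη⟩
        · rw [le_div_iff₀ hlenpos] at hjle; linarith
        · rw [div_lt_iff₀ hlenpos] at hjlt1; nlinarith
    calc volume {x ∈ Set.Icc a b | |f x| ≤ η}
        ≤ volume (⋃ j ∈ Finset.range n,
            {x ∈ Set.Icc (a + j*len) (a + (j+1)*len) | |f x| ≤ η}) := measure_mono hcover
      _ ≤ ∑ j ∈ Finset.range n,
            volume {x ∈ Set.Icc (a + j*len) (a + (j+1)*len) | |f x| ≤ η} :=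
          measure_biUnion_finset_le _ _
      _ ≤ ∑ j ∈ Finset.range n, ENNReal.ofReal (6^r * (2*θ/τ)) := by
          apply Finset.sum_le_sum
          intro j hj
          exact hpiece j (Finset.mem_range.1 hj)
      _ = (n : ENNReal) * ENNReal.ofReal (6^r * (2*θ/τ)) := by
          rw [Finset.sum_const, Finset.card_range, nsmul_eq_mul]
      _ = ENNReal.ofReal ((n:ℝ) * (6^r * (2*θ/τ))) := by
          rw [← ENNReal.ofReal_natCast n, ← ENNReal.ofReal_mul (by positivity)]
      _ ≤ ENNReal.ofReal (6^(r+1) * A * (b - a) * θ / τ^2) := by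
          apply ENNReal.ofReal_le_ofReal
          have h1 : (n:ℝ) * (6^r * (2*θ/τ)) ≤ (3*M) * (6^r * (2*θ/τ)) :=
            mul_le_mul_of_nonneg_right hnle (by positivity)
          have h2 : (3*M) * (6^r * (2*θ/τ)) = 6^(r+1) * A * (b - a) * θ / τ^2 := by
            rw [hM]; field_simp; ring
          linarith
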